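/- Switching lemma (Poisson version). Let G=(V,E) be a finite graph without loops and λ ≥ 0. Let M=(M_e : e∈E) and M'=(M'_e : e∈E) be two independent families of independent Poisson random variables, each with mean λ. Let x,y ∈ V be distinct, A ⊆ V, and let s ∈ ℕ^E be such that x ↔ y in s. Then P(∂M = {x,y}, ∂M' = A, M + M' = s) = P(∂M = ∅, ∂M' = A △ {x,y}, M + M' = s), where M + M' is the componentwise sum and △ denotes symmetric difference. -/

import Mathlib

open scoped BigOperators symmDiff Classical

noncomputable section FlowsAndFerromagnets

/-- The number of non-zero mod-`q` flows on the (multi)graph with vertex type `V`,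
edge-index type `ι`, and a fixed orientation in which edge `i` leaves `s i` and
arrives at `t i`.  A mod-`q` flow assigns a value of `ZMod q` to every oriented edge
so that, at every vertex, the total flow leaving equals the total flow arriving
(mod `q`); it is non-zero if no edge carries the value `0`. -/
def flowCount (V : Type) [Fintype V] [DecidableEq V] {ι : Type} [Fintype ι]
    (s t : ι → V) (q : ℕ) : ℕ :=
  Nat.card {f : ι → ZMod q //
    (∀ i, f i ≠ 0) ∧
    ∀ v : V, (∑ i, if s i = v then f i else 0) = (∑ i, if t i = v then f i else 0)}

/-- `C(G_m; q)`: the number of non-zero mod-`q` flows on the multigraph `G_m`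
obtained from `G` (edges indexed by `E`, with endpoints `s e`, `t e`) by replacing
each edge `e` by `m e` parallel copies. -/
def flowCountM {V E : Type} [Fintype V] [DecidableEq V] [Fintype E]
    (s t : E → V) (m : E → ℕ) (q : ℕ) : ℕ :=
  flowCount V (fun x : Σ e : E, Fin (m e) => s x.1) (fun x : Σ e : E, Fin (m e) => t x.1) q

/-- `C(G_m^{x,y}; q)`: the number of non-zero mod-`q` flows on the multigraph `G_m`
augmented by one extra edge joining `x` and `y`. -/
def flowCountMxy {V E : Type} [Fintype V] [DecidableEq V] [Fintype E]
    (s t : E → V) (m : E → ℕ) (x y : V) (q : ℕ) : ℕ :=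
  flowCount V
    (fun o : Option (Σ e : E, Fin (m e)) => o.elim x (fun z => s z.1))
    (fun o : Option (Σ e : E, Fin (m e)) => o.elim y (fun z => t z.1)) q

/-- The Poisson weight `∏_e e^{-λ_e} λ_e^{m_e} / m_e!` of a vector of edge multiplicities. -/
def poissonWt {E : Type} [Fintype E] (lam : E → ℝ) (m : E → ℕ) : ℝ :=
  ∏ e, Real.exp (-lam e) * lam e ^ (m e) / (Nat.factorial (m e))

/-- Expectation `E_λ(f(P))` with respect to independent Poisson multiplicities `P e`
of mean `lam e`. -/
def poissonExp {E : Type} [Fintype E] (lam : E → ℝ) (f : (E → ℕ) → ℝ) : ℝ :=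
  ∑' m : E → ℕ, poissonWt lam m * f m

/-- Probability `P_λ(P ∈ A)` with respect to independent Poisson multiplicities. -/
def poissonProb {E : Type} [Fintype E] (lam : E → ℝ) (A : (E → ℕ) → Prop) : ℝ :=
  ∑' m : E → ℕ, poissonWt lam m * (if A m then 1 else 0)

/-- Probability of an event for two independent families of independent Poisson
multiplicities. -/
def poissonProb2 {E : Type} [Fintype E] (lam : E → ℝ)
    (A : (E → ℕ) → (E → ℕ) → Prop) : ℝ :=
  ∑' m : E → ℕ, ∑' m' : E → ℕ,
    poissonWt lam m * poissonWt lam m' * (if A m m' then 1 else 0)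

/-- The (unnormalised) Potts weight `exp(∑_e β J_e (q δ_e(σ) - 1))` of a spin
configuration `σ`. -/
def pottsWt {V E : Type} [Fintype E] (s t : E → V) (q : ℕ) (β : ℝ) (J : E → ℝ)
    (σ : V → Fin q) : ℝ :=
  Real.exp (∑ e, β * J e * ((q : ℝ) * (if σ (s e) = σ (t e) then 1 else 0) - 1))

/-- The Potts partition function `Z_P`. -/
def pottsZ (V : Type) {E : Type} [Fintype V] [DecidableEq V] [Fintype E]
    (s t : E → V) (q : ℕ) (β : ℝ) (J : E → ℝ) : ℝ :=
  ∑ σ : V → Fin q, pottsWt s t q β J σ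

/-- The Potts two-point function `σ(x,y) = ∑_σ (q δ_{σ_x,σ_y} - 1) π(σ)`. -/
def pottsTwoPoint {V E : Type} [Fintype V] [DecidableEq V] [Fintype E]
    (s t : E → V) (q : ℕ) (β : ℝ) (J : E → ℝ) (x y : V) : ℝ :=
  (∑ σ : V → Fin q, ((q : ℝ) * (if σ x = σ y then 1 else 0) - 1) * pottsWt s t q β J σ)
    / pottsZ V s t q β J

/-- The degree of the vertex `v` in the multigraph `G_m`. -/
def mDeg {V E : Type} [Fintype E] [DecidableEq V] (s t : E → V) (m : E → ℕ) (v : V) : ℕ :=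
  ∑ e, m e * ((if s e = v then 1 else 0) + (if t e = v then 1 else 0))

/-- The multigraph `G_m` is even: every vertex has even degree. -/
def IsEvenM {V E : Type} [Fintype E] [DecidableEq V] (s t : E → V) (m : E → ℕ) : Prop :=
  ∀ v : V, Even (mDeg s t m v)

/-- The multigraph `G_m^{x,y}` (with one extra edge joining `x` and `y`) is even. -/
def IsEvenMxy {V E : Type} [Fintype E] [DecidableEq V] (s t : E → V) (m : E → ℕ)
    (x y : V) : Prop :=
  ∀ v : V, Even (mDeg s t m v + (if v = x then 1 else 0) + (if v = y then 1 else 0))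

/-- The source set `∂m` of a vector of multiplicities: the set of vertices of odd
degree in `G_m`. -/
def sources {V E : Type} [Fintype E] [DecidableEq V] (s t : E → V) (m : E → ℕ) : Set V :=
  {v : V | Odd (mDeg s t m v)}

/-- The simple graph on `V` induced by the edges `e` satisfying `pred e`. -/
def openGraph {V E : Type} (s t : E → V) (pred : E → Prop) : SimpleGraph V :=
  SimpleGraph.fromRel (fun a b => ∃ e, pred e ∧ s e = a ∧ t e = b)

/-- `x ↔ y in m`: `x` and `y` lie in the same component of `(V, {e : m e ≥ 1})`. -/
def ConnectedIn {V E : Type} (s t : E → V) (m : E → ℕ) (x y : V) : Prop :=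
  (openGraph s t fun e => m e ≠ 0).Reachable x y

/-- `x ↔ y` in the percolation configuration `ω`. -/
def ConnectedInB {V E : Type} (s t : E → V) (ω : E → Bool) (x y : V) : Prop :=
  (openGraph s t fun e => ω e = true).Reachable x y

/-- The number of connected components of the graph `(V, {e : pred e})`
(isolated vertices count). -/
def numComp {V E : Type} [Fintype V] (s t : E → V) (pred : E → Prop) : ℕ :=
  Nat.card (openGraph s t pred).ConnectedComponent

/-- Product (percolation) weight of a configuration, with edge densities `p`. -/
def percWt {E : Type} [Fintype E] (p : E → ℝ) (ω : E → Bool) : ℝ :=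
  ∏ e, if ω e then p e else 1 - p e

/-- Random-cluster weight of the configuration `ω`. -/
def rcWt {V E : Type} [Fintype V] [Fintype E] (s t : E → V) (p : E → ℝ) (q : ℝ)
    (ω : E → Bool) : ℝ :=
  percWt p ω * q ^ numComp s t (fun e => ω e = true)

/-- Random-cluster probability `φ_{p,q}(A)` of an event `A`. -/
def rcProb {V E : Type} [Fintype V] [Fintype E] (s t : E → V) (p : E → ℝ) (q : ℝ)
    (A : (E → Bool) → Prop) : ℝ :=
  (∑ ω : E → Bool, if A ω then rcWt s t p q ω else 0) / (∑ ω : E → Bool, rcWt s t p q ω)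

/-- The Whitney rank-generating function `W(u,v) = ∑_{F' ⊆ F} u^{r(F')} v^{c(F')}`
of the multigraph with vertex type `V` and edge-index type `ι`, where
`r(F') = |V| - k(F')` and `c(F') = |F'| - |V| + k(F')`. -/
def whitney (V : Type) [Fintype V] {ι : Type} [Fintype ι] (s t : ι → V) (u v : ℝ) : ℝ :=
  ∑ F : Finset ι,
    u ^ (Fintype.card V - numComp s t (· ∈ F)) *
      v ^ (F.card - (Fintype.card V - numComp s t (· ∈ F)))

/-- `F_q(G_m) = (-1)^{|edges| + |V| - 1} W_{G_m}(-1, -q)`, a real-`q` version of the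
flow polynomial of the multigraph `G_m`. -/
def flowPolyW {V E : Type} [Fintype V] [Fintype E] (s t : E → V) (q : ℝ) (m : E → ℕ) : ℝ :=
  (-1 : ℝ) ^ ((∑ e, m e) + Fintype.card V - 1) *
    whitney V (fun x : Σ e : E, Fin (m e) => s x.1) (fun x : Σ e : E, Fin (m e) => t x.1)
      (-1) (-q)

/-- `F_q(G_m^{x,y})`: as `flowPolyW`, for the multigraph `G_m` with one extra edge
joining `x` and `y`. -/
def flowPolyWxy {V E : Type} [Fintype V] [Fintype E] (s t : E → V) (q : ℝ) (m : E → ℕ)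
    (x y : V) : ℝ :=
  (-1 : ℝ) ^ (((∑ e, m e) + 1) + Fintype.card V - 1) *
    whitney V (fun o : Option (Σ e : E, Fin (m e)) => o.elim x (fun z => s z.1))
      (fun o : Option (Σ e : E, Fin (m e)) => o.elim y (fun z => t z.1)) (-1) (-q)

end FlowsAndFerromagnets

section SwitchingAux

open Finset

variable {V E : Type} [Fintype V] [DecidableEq V] [Fintype E]


private lemma ite_norm {α : Sort _} (p : Prop) (inst : Decidable p) (a b : α) :
    (@ite α p inst a b) = (@ite α p (Classical.propDecidable p) a b) := by
  by_cases h : p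
  · exact (if_pos h).trans (if_pos h).symm
  · exact (if_neg h).trans (if_neg h).symm

private lemma zmod2_cases : ∀ a : ZMod 2, a = 0 ∨ a = 1 := by decide

private lemma zmod2_sub (a b : ZMod 2) : a - b = a + b := by revert a b; decide

private lemma odd_iff_zmod2 (n : ℕ) : Odd n ↔ (n : ZMod 2) = 1 := by
  have h2 : ((n % 2 : ℕ) : ZMod 2) = (n : ZMod 2) := ZMod.natCast_mod n 2
  rw [Nat.odd_iff, ← h2]
  rcases Nat.mod_two_eq_zero_or_one n with h | h <;> simp [h]

private lemma even_iff_zmod2 (n : ℕ) : Even n ↔ (n : ZMod 2) = 0 := by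
  rw [← Nat.not_odd_iff_even, odd_iff_zmod2]
  rcases zmod2_cases (n : ZMod 2) with h | h <;> simp [h]

/-- mod-2 degree of `v` for a mod-2 multiplicity vector. -/
private def degB (s t : E → V) (σ : E → ZMod 2) (v : V) : ZMod 2 :=
  ∑ e, σ e * ((if s e = v then 1 else 0) + (if t e = v then 1 else 0))

private lemma degB_add (s t : E → V) (σ τ : E → ZMod 2) (v : V) :
    degB s t (σ + τ) v = degB s t σ v + degB s t τ v := by
  simp [degB, add_mul, Finset.sum_add_distrib]

private lemma mdeg_cast (s t : E → V) (m : E → ℕ) (v : V) :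
    ((mDeg s t m v : ℕ) : ZMod 2) = degB s t (fun e => (m e : ZMod 2)) v := by
  rw [mDeg, degB, Nat.cast_sum]
  refine Finset.sum_congr rfl fun e _ => ?_
  push_cast
  rfl

private lemma sources_eq_iff (s t : E → V) (m : E → ℕ) (X : Set V) :
    sources s t m = X ↔ ∀ v, (degB s t (fun e => (m e : ZMod 2)) v = 1 ↔ v ∈ X) := by
  rw [Set.ext_iff]
  refine forall_congr' fun v => ?_
  rw [sources, Set.mem_setOf_eq, odd_iff_zmod2, mdeg_cast]

private lemma exists_toggle (s t : E → V) (pred : E → Prop) {x y : V}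
    (h : (openGraph s t pred).Reachable x y) :
    ∃ τ : E → ZMod 2, (∀ e, τ e ≠ 0 → pred e) ∧
      ∀ v, degB s t τ v = (if x = v then 1 else 0) + (if y = v then 1 else 0) := by
  obtain ⟨w⟩ := h
  induction w with
  | nil =>
      refine ⟨0, by simp, fun v => ?_⟩
      simp only [degB, Pi.zero_apply, zero_mul, Finset.sum_const_zero]
      split_ifs <;> decide
  | @cons a b c hadj p ih =>
      obtain ⟨τ', hsupp, hdeg⟩ := ih
      rw [openGraph, SimpleGraph.fromRel_adj] at hadj
      obtain ⟨hne, he⟩ := hadj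
      have he' : ∃ e, pred e ∧ ((s e = a ∧ t e = b) ∨ (s e = b ∧ t e = a)) := by
        rcases he with ⟨e, hp, h1, h2⟩ | ⟨e, hp, h1, h2⟩
        · exact ⟨e, hp, Or.inl ⟨h1, h2⟩⟩
        · exact ⟨e, hp, Or.inr ⟨h1, h2⟩⟩
      obtain ⟨e, hp, hst⟩ := he'
      refine ⟨τ' + fun e' => if e' = e then 1 else 0, ?_, ?_⟩
      · intro e' h'
        by_cases hee : e' = e
        · exact hee ▸ hp
        · refine hsupp e' ?_
          simpa [Pi.add_apply, hee] using h'
      · intro v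
        rw [degB_add, hdeg v]
        have hδ : degB s t (fun e' => if e' = e then 1 else 0) v
            = (if s e = v then 1 else 0) + (if t e = v then 1 else 0) := by
          rw [degB]
          rw [Finset.sum_eq_single e]
          · simp
          · intro e' _ hee; simp [hee]
          · intro h; exact absurd (Finset.mem_univ e) h
        rw [hδ]
        rcases hst with ⟨h1, h2⟩ | ⟨h1, h2⟩ <;> rw [h1, h2] <;>
        · generalize (if a = v then (1 : ZMod 2) else 0) = A
          generalize (if b = v then (1 : ZMod 2) else 0) = B
          generalize (if c = v then (1 : ZMod 2) else 0) = C
          revert A B C; decide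



private lemma binom_parity {n : ℕ} (hn : n ≠ 0) (b : ZMod 2) :
    ∑ k ∈ Finset.range (n + 1), (if (k : ZMod 2) = b + 1 then (n.choose k : ℝ) else 0)
      = ∑ k ∈ Finset.range (n + 1), (if (k : ZMod 2) = b then (n.choose k : ℝ) else 0) := by
  have key : ∑ k ∈ Finset.range (n + 1), (if (k : ZMod 2) = 0 then (n.choose k : ℝ) else 0)
      - ∑ k ∈ Finset.range (n + 1), (if (k : ZMod 2) = 1 then (n.choose k : ℝ) else 0) = 0 := by
    rw [← Finset.sum_sub_distrib]
    have h : ∑ k ∈ Finset.range (n + 1), ((-1 : ℝ)) ^ k * (n.choose k : ℝ) = 0 := by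
      have h0 := Int.alternating_sum_range_choose (n := n)
      rw [if_neg hn] at h0
      exact_mod_cast congrArg (Int.cast : ℤ → ℝ) h0
    refine Eq.trans (Finset.sum_congr rfl fun k _ => ?_) h
    rcases Nat.even_or_odd k with hk | hk
    · have h0 : (k : ZMod 2) = 0 := (even_iff_zmod2 k).1 hk
      rw [h0, if_pos rfl, if_neg (by decide), sub_zero, hk.neg_one_pow, one_mul]
    · have h1 : (k : ZMod 2) = 1 := (odd_iff_zmod2 k).1 hk
      rw [h1, if_neg (by decide), if_pos rfl, zero_sub, hk.neg_one_pow, neg_one_mul]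
  have key' := sub_eq_zero.mp key
  rcases zmod2_cases b with hb | hb <;> subst hb
  · rw [zero_add]; exact key'.symm
  · rw [show (1 + 1 : ZMod 2) = 0 by decide]; exact key'

private lemma sum_parity_flip (lam : ℝ) {n : ℕ} (hn : n ≠ 0) (b : ZMod 2) :
    ∑ k ∈ Finset.range (n + 1),
        (if (k : ZMod 2) = b + 1 then
          Real.exp (-lam) * lam ^ k / (Nat.factorial k) *
            (Real.exp (-lam) * lam ^ (n - k) / (Nat.factorial (n - k))) else 0)
      = ∑ k ∈ Finset.range (n + 1),
        (if (k : ZMod 2) = b then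
          Real.exp (-lam) * lam ^ k / (Nat.factorial k) *
            (Real.exp (-lam) * lam ^ (n - k) / (Nat.factorial (n - k))) else 0) := by
  have hg : ∀ k ∈ Finset.range (n + 1),
      Real.exp (-lam) * lam ^ k / (Nat.factorial k) *
          (Real.exp (-lam) * lam ^ (n - k) / (Nat.factorial (n - k)))
        = (Real.exp (-lam) * Real.exp (-lam) * lam ^ n / (Nat.factorial n)) * (n.choose k : ℝ) := by
    intro k hk
    have hkn : k ≤ n := by have := Finset.mem_range.mp hk; omega
    have hfac : ((n.choose k : ℝ)) * (Nat.factorial k) * (Nat.factorial (n - k))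
        = (Nat.factorial n : ℝ) := by
      exact_mod_cast congrArg (Nat.cast : ℕ → ℝ) (Nat.choose_mul_factorial_mul_factorial hkn)
    have hpow : lam ^ k * lam ^ (n - k) = lam ^ n := by
      rw [← pow_add]; congr 1; omega
    have hf1 : (0 : ℝ) < (Nat.factorial k : ℝ) := Nat.cast_pos.mpr (Nat.factorial_pos k)
    have hf2 : (0 : ℝ) < (Nat.factorial (n - k) : ℝ) := Nat.cast_pos.mpr (Nat.factorial_pos (n - k))
    have hf3 : (0 : ℝ) < (Nat.factorial n : ℝ) := Nat.cast_pos.mpr (Nat.factorial_pos n)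
    rw [div_mul_div_comm, div_mul_eq_mul_div, div_eq_div_iff (by positivity) (by positivity),
      ← hpow]
    linear_combination (-(Real.exp (-lam) * Real.exp (-lam) * lam ^ k * lam ^ (n - k))) * hfac
  have step : ∀ b' : ZMod 2,
      ∑ k ∈ Finset.range (n + 1),
        (if (k : ZMod 2) = b' then
          Real.exp (-lam) * lam ^ k / (Nat.factorial k) *
            (Real.exp (-lam) * lam ^ (n - k) / (Nat.factorial (n - k))) else 0)
      = (Real.exp (-lam) * Real.exp (-lam) * lam ^ n / (Nat.factorial n)) *
          ∑ k ∈ Finset.range (n + 1), (if (k : ZMod 2) = b' then (n.choose k : ℝ) else 0) := by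
    intro b'
    rw [Finset.mul_sum]
    refine Finset.sum_congr rfl fun k hk => ?_
    by_cases h : (k : ZMod 2) = b'
    · rw [if_pos h, if_pos h, hg k hk]
    · rw [if_neg h, if_neg h, mul_zero]
  rw [step, step, binom_parity hn b]

private lemma poissonProb2_reduce (s t : E → V) (lam : ℝ) (sv : E → ℕ) (X B : Set V) :
    poissonProb2 (fun _ => lam)
        (fun mm mm' => sources s t mm = X ∧ sources s t mm' = B ∧ mm + mm' = sv)
      = ∑ σ : E → ZMod 2,
          (if ((∀ v, (degB s t σ v = 1 ↔ v ∈ X)) ∧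
               (∀ v, (degB s t (fun e => ((sv e : ℕ) : ZMod 2)) v + degB s t σ v = 1 ↔ v ∈ B)))
            then (1 : ℝ) else 0) *
          ∏ e, ∑ k ∈ Finset.range (sv e + 1),
            (if (k : ZMod 2) = σ e then
              Real.exp (-lam) * lam ^ k / (Nat.factorial k) *
                (Real.exp (-lam) * lam ^ (sv e - k) / (Nat.factorial (sv e - k))) else 0) := by
  classical
  rw [poissonProb2]
  simp only [ite_norm]
  -- Step 1: collapse the inner tsum
  have h1 : ∀ m : E → ℕ,
      (∑' m' : E → ℕ, poissonWt (fun _ => lam) m * poissonWt (fun _ => lam) m' *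
        (if (sources s t m = X ∧ sources s t m' = B ∧ m + m' = sv) then (1:ℝ) else 0))
      = poissonWt (fun _ => lam) m * poissonWt (fun _ => lam) (sv - m) *
        (if (sources s t m = X ∧ sources s t (sv - m) = B ∧ m + (sv - m) = sv)
          then (1:ℝ) else 0) := by
    intro m
    refine tsum_eq_single (sv - m) fun m' hm' => ?_
    by_cases hc : m + m' = sv
    · exfalso
      apply hm'
      funext e
      have h := congrFun hc e
      simp only [Pi.add_apply] at h
      show m' e = sv e - m e
      omega
    · rw [if_neg (fun h => hc h.2.2), mul_zero]
  simp only [ite_norm] at h1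
  refine (tsum_congr h1).trans ?_
  -- Step 2: tsum to a finite sum
  have h2 : ∀ m : E → ℕ, m ∉ Fintype.piFinset (fun e => Finset.range (sv e + 1)) →
      poissonWt (fun _ => lam) m * poissonWt (fun _ => lam) (sv - m) *
        (if (sources s t m = X ∧ sources s t (sv - m) = B ∧ m + (sv - m) = sv)
          then (1:ℝ) else 0) = 0 := by
    intro m hm
    have : ∃ e, ¬ (m e ∈ Finset.range (sv e + 1)) := by
      by_contra hc; push_neg at hc; exact hm (Fintype.mem_piFinset.mpr hc)
    obtain ⟨e, he⟩ := this
    have hbig : sv e < m e := by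
      rcases Nat.lt_or_ge (m e) (sv e + 1) with h | h
      · exact absurd (Finset.mem_range.mpr h) he
      · omega
    have hne : ¬ (m + (sv - m) = sv) := by
      intro h
      have := congrFun h e
      simp only [Pi.add_apply, Pi.sub_apply] at this
      omega
    rw [if_neg (fun h => hne h.2.2), mul_zero]
  simp only [ite_norm] at h2
  refine (tsum_eq_sum h2).trans ?_
  -- Step 3: rewrite each term
  have h3 : ∀ m ∈ Fintype.piFinset (fun e => Finset.range (sv e + 1)),
      poissonWt (fun _ => lam) m * poissonWt (fun _ => lam) (sv - m) *
        (if (sources s t m = X ∧ sources s t (sv - m) = B ∧ m + (sv - m) = sv)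
          then (1:ℝ) else 0)
      = (if ((∀ v, (degB s t (fun e => ((m e : ℕ) : ZMod 2)) v = 1 ↔ v ∈ X)) ∧
              (∀ v, (degB s t (fun e => ((sv e : ℕ) : ZMod 2)) v
                + degB s t (fun e => ((m e : ℕ) : ZMod 2)) v = 1 ↔ v ∈ B)))
          then (1 : ℝ) else 0) *
        ∏ e, (Real.exp (-lam) * lam ^ (m e) / (Nat.factorial (m e)) *
          (Real.exp (-lam) * lam ^ (sv e - m e) / (Nat.factorial (sv e - m e)))) := by
    intro m hm
    have hle : ∀ e, m e ≤ sv e := by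
      intro e
      have := Fintype.mem_piFinset.mp hm e
      have := Finset.mem_range.mp this
      omega
    have hsum : m + (sv - m) = sv := by
      funext e
      show m e + (sv e - m e) = sv e
      have := hle e; omega
    have hwt : poissonWt (fun _ => lam) m * poissonWt (fun _ => lam) (sv - m)
        = ∏ e, (Real.exp (-lam) * lam ^ (m e) / (Nat.factorial (m e)) *
            (Real.exp (-lam) * lam ^ (sv e - m e) / (Nat.factorial (sv e - m e)))) := by
      rw [poissonWt, poissonWt, ← Finset.prod_mul_distrib]
      exact Finset.prod_congr rfl fun e _ => rfl
    have hΦ : (fun e => (((sv - m) e : ℕ) : ZMod 2))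
        = (fun e => ((sv e : ℕ) : ZMod 2)) + (fun e => ((m e : ℕ) : ZMod 2)) := by
      funext e
      show (((sv e - m e : ℕ)) : ZMod 2) = ((sv e : ℕ) : ZMod 2) + ((m e : ℕ) : ZMod 2)
      rw [Nat.cast_sub (hle e), zmod2_sub]
    have hc : (sources s t m = X ∧ sources s t (sv - m) = B ∧ m + (sv - m) = sv)
        ↔ ((∀ v, (degB s t (fun e => ((m e : ℕ) : ZMod 2)) v = 1 ↔ v ∈ X)) ∧
            (∀ v, (degB s t (fun e => ((sv e : ℕ) : ZMod 2)) v
              + degB s t (fun e => ((m e : ℕ) : ZMod 2)) v = 1 ↔ v ∈ B))) := by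
      rw [sources_eq_iff s t m X, sources_eq_iff s t (sv - m) B]
      constructor
      · rintro ⟨ha, hb, -⟩
        refine ⟨ha, fun v => ?_⟩
        rw [← degB_add, ← hΦ]
        exact hb v
      · rintro ⟨ha, hb⟩
        exact ⟨ha, fun v => by rw [hΦ, degB_add]; exact hb v, hsum⟩
    by_cases hcc : ((∀ v, (degB s t (fun e => ((m e : ℕ) : ZMod 2)) v = 1 ↔ v ∈ X)) ∧
        (∀ v, (degB s t (fun e => ((sv e : ℕ) : ZMod 2)) v
          + degB s t (fun e => ((m e : ℕ) : ZMod 2)) v = 1 ↔ v ∈ B)))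
    · rw [if_pos hcc, if_pos (hc.mpr hcc), hwt, mul_one, one_mul]
    · rw [if_neg hcc, if_neg (fun h => hcc (hc.mp h)), mul_zero, zero_mul]
  simp only [ite_norm] at h3
  refine (Finset.sum_congr rfl h3).trans ?_
  -- Step 4: fiberwise grouping and factorisation
  refine Eq.trans (Finset.sum_fiberwise (Fintype.piFinset (fun e => Finset.range (sv e + 1)))
    (fun m => (fun e => ((m e : ℕ) : ZMod 2))) _).symm ?_
  refine Finset.sum_congr rfl fun σ _ => ?_
  have hfact : ∑ m ∈ (Fintype.piFinset (fun e => Finset.range (sv e + 1))).filter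
        (fun m => (fun e => ((m e : ℕ) : ZMod 2)) = σ),
      ∏ e, (Real.exp (-lam) * lam ^ (m e) / (Nat.factorial (m e)) *
        (Real.exp (-lam) * lam ^ (sv e - m e) / (Nat.factorial (sv e - m e))))
      = ∏ e, ∑ k ∈ Finset.range (sv e + 1),
          (if (k : ZMod 2) = σ e then
            Real.exp (-lam) * lam ^ k / (Nat.factorial k) *
              (Real.exp (-lam) * lam ^ (sv e - k) / (Nat.factorial (sv e - k))) else 0) := by
    rw [Finset.sum_filter]
    have hsw : ∀ m ∈ Fintype.piFinset (fun e => Finset.range (sv e + 1)),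
        (if (fun e => ((m e : ℕ) : ZMod 2)) = σ then
          ∏ e, (Real.exp (-lam) * lam ^ (m e) / (Nat.factorial (m e)) *
            (Real.exp (-lam) * lam ^ (sv e - m e) / (Nat.factorial (sv e - m e)))) else 0)
        = ∏ e, (if ((m e : ℕ) : ZMod 2) = σ e then
            Real.exp (-lam) * lam ^ (m e) / (Nat.factorial (m e)) *
              (Real.exp (-lam) * lam ^ (sv e - m e) / (Nat.factorial (sv e - m e))) else 0) := by
      intro m _
      by_cases h : (fun e => ((m e : ℕ) : ZMod 2)) = σ
      · rw [if_pos h]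
        exact Finset.prod_congr rfl fun e _ => (if_pos (congrFun h e)).symm
      · rw [if_neg h]
        have : ∃ e, ¬ (((m e : ℕ) : ZMod 2) = σ e) := by
          by_contra hcon; push_neg at hcon; exact h (funext hcon)
        obtain ⟨e, he⟩ := this
        refine (Finset.prod_eq_zero_iff.mpr ⟨e, Finset.mem_univ e, ?_⟩).symm
        exact if_neg he
    exact (Finset.sum_congr rfl hsw).trans
      (Finset.prod_univ_sum (fun e => Finset.range (sv e + 1))
        (fun e k => if ((k : ℕ) : ZMod 2) = σ e then
          Real.exp (-lam) * lam ^ k / (Nat.factorial k) *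
            (Real.exp (-lam) * lam ^ (sv e - k) / (Nat.factorial (sv e - k))) else 0)).symm
  simp only [ite_norm] at hfact
  rw [← hfact, Finset.mul_sum]
  refine Finset.sum_congr rfl fun m hm => ?_
  rw [(Finset.mem_filter.mp hm).2]

private lemma clause1 (d χ : ZMod 2) (mem : Prop) (hmem : mem ↔ χ = 1) :
    ((d + χ = 1) ↔ mem) ↔ ((d = 1) ↔ False) := by
  rw [hmem]
  clear hmem
  revert d χ
  decide

private lemma clause2 (d χ : ZMod 2) (mA mD : Prop)
    (h : mD ↔ ((mA ∧ ¬ χ = 1) ∨ (χ = 1 ∧ ¬ mA))) :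
    ((d + χ = 1) ↔ mA) ↔ ((d = 1) ↔ mD) := by
  rw [h]
  clear h
  by_cases hA : mA <;>
    simp only [hA, true_and, and_true, false_and, and_false, false_or, or_false,
      not_true, not_false_iff, iff_true, iff_false] <;>
    revert d χ <;> decide

private lemma mem_pair_iff {x y : V} (hxy : x ≠ y) (v : V) :
    v ∈ ({x, y} : Set V) ↔
      ((if x = v then (1 : ZMod 2) else 0) + (if y = v then 1 else 0)) = 1 := by
  rw [Set.mem_insert_iff, Set.mem_singleton_iff]
  by_cases hvx : x = v <;> by_cases hvy : y = v
  · exact absurd (hvx.trans hvy.symm) hxy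
  · subst hvx; simp [hvy]
  · subst hvy; simp [hvx]
  · have h1 : ¬ (v = x) := fun h => hvx h.symm
    have h2 : ¬ (v = y) := fun h => hvy h.symm
    simp [hvx, hvy, h1, h2]

end SwitchingAux

/-- Switching lemma, Poisson version: if `x ↔ y` in `sv` then
`P(∂M = {x,y}, ∂M' = A, M + M' = sv) = P(∂M = ∅, ∂M' = A ∆ {x,y}, M + M' = sv)`. -/
theorem switching_lemma_poisson
    (V E : Type) [Fintype V] [DecidableEq V] [Fintype E]
    (s t : E → V) (hloop : ∀ e, s e ≠ t e)
    (lam : ℝ) (hlam : 0 ≤ lam)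
    (x y : V) (hxy : x ≠ y) (A : Set V)
    (sv : E → ℕ) (hconn : ConnectedIn s t sv x y) :
    poissonProb2 (fun _ => lam)
        (fun mm mm' => sources s t mm = ({x, y} : Set V) ∧ sources s t mm' = A ∧
          mm + mm' = sv)
      = poissonProb2 (fun _ => lam)
          (fun mm mm' => sources s t mm = (∅ : Set V) ∧
            sources s t mm' = A ∆ ({x, y} : Set V) ∧ mm + mm' = sv) := by
  classical
  rw [ConnectedIn] at hconn
  obtain ⟨τ, hτsupp, hτdeg⟩ := exists_toggle s t (fun e => sv e ≠ 0) hconn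
  rw [poissonProb2_reduce s t lam sv ({x, y} : Set V) A,
      poissonProb2_reduce s t lam sv (∅ : Set V) (A ∆ ({x, y} : Set V))]
  refine (Fintype.sum_bijective (fun σ : E → ZMod 2 => σ + τ)
    (Equiv.addRight τ).bijective _ _ fun σ => ?_).symm
  have hiff : ((∀ v, (degB s t (σ + τ) v = 1 ↔ v ∈ ({x, y} : Set V))) ∧
      (∀ v, (degB s t (fun e => ((sv e : ℕ) : ZMod 2)) v + degB s t (σ + τ) v = 1 ↔ v ∈ A)))
      ↔ ((∀ v, (degB s t σ v = 1 ↔ v ∈ (∅ : Set V))) ∧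
      (∀ v, (degB s t (fun e => ((sv e : ℕ) : ZMod 2)) v + degB s t σ v = 1
        ↔ v ∈ A ∆ ({x, y} : Set V)))) := by
    refine and_congr (forall_congr' fun v => ?_) (forall_congr' fun v => ?_)
    · rw [degB_add, hτdeg v, Set.mem_empty_iff_false]
      exact clause1 _ _ _ (mem_pair_iff hxy v)
    · rw [degB_add, hτdeg v, ← add_assoc]
      exact clause2 _ _ _ _ (by rw [Set.mem_symmDiff, mem_pair_iff hxy v])
  have hβ : (fun σ : E → ZMod 2 => σ + τ) σ = σ + τ := rfl
  have hprod : ∏ e, (∑ k ∈ Finset.range (sv e + 1),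
        (if (k : ZMod 2) = σ e then
          Real.exp (-lam) * lam ^ k / (Nat.factorial k) *
            (Real.exp (-lam) * lam ^ (sv e - k) / (Nat.factorial (sv e - k))) else 0))
      = ∏ e, (∑ k ∈ Finset.range (sv e + 1),
        (if (k : ZMod 2) = (σ + τ) e then
          Real.exp (-lam) * lam ^ k / (Nat.factorial k) *
            (Real.exp (-lam) * lam ^ (sv e - k) / (Nat.factorial (sv e - k))) else 0)) := by
    refine Finset.prod_congr rfl fun e _ => ?_
    rw [Pi.add_apply]
    rcases zmod2_cases (τ e) with h | h
    · rw [h, add_zero]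
    · rw [h]
      exact (sum_parity_flip lam (hτsupp e (by rw [h]; exact one_ne_zero)) (σ e)).symm
  by_cases hcc : ((∀ v, (degB s t σ v = 1 ↔ v ∈ (∅ : Set V))) ∧
      (∀ v, (degB s t (fun e => ((sv e : ℕ) : ZMod 2)) v + degB s t σ v = 1
        ↔ v ∈ A ∆ ({x, y} : Set V))))
  · rw [if_pos hcc, if_pos (hiff.mpr hcc), one_mul, one_mul]
    exact hprod
  · rw [if_neg hcc, if_neg (fun h => hcc (hiff.mp h)), zero_mul, zero_mul]
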